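/- For the lexicographically minimal word w(σ) produced by a monotone order-oblivious protocol (over all permutations σ, where w(σ)_i is the bit written at location σ_i), w(σ) consists of a block of 0's followed by a block of 1's followed by a single *. -/

import Mathlib

/-- The partial assignment written by an order-oblivious protocol `B` after `t` steps of
the stream `σ` (the element arriving at time `t` is `σ t`; `B ℓ α` is the bit Alice writes
at an arriving location `ℓ` when the current partial assignment is `α`). -/
def partOO {n : ℕ} (B : Fin n → (Fin n → Option Bool) → Bool) (σ : Equiv.Perm (Fin n)) :
    ℕ → (Fin n → Option Bool)
  | 0 => fun _ => none
  | t + 1 =>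
    if h : t < n then
      Function.update (partOO B σ t) (σ ⟨t, h⟩) (some (B (σ ⟨t, h⟩) (partOO B σ t)))
    else partOO B σ t

/-- The bit written by the order-oblivious protocol `B` at location `ℓ` on stream `σ`. -/
def writeOO {n : ℕ} (B : Fin n → (Fin n → Option Bool) → Bool) (σ : Equiv.Perm (Fin n))
    (ℓ : Fin n) : Bool :=
  B ℓ (partOO B σ ((σ.symm ℓ : ℕ)))

/-- The hypercube edge `Π_A(σ)`: the array written after the first `n - 1` steps, with a
single unfilled (`none`) coordinate at the last location `σ (n-1)`. -/
def edgeOO {n : ℕ} (B : Fin n → (Fin n → Option Bool) → Bool) (σ : Equiv.Perm (Fin n)) :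
    Fin n → Option Bool :=
  partOO B σ (n - 1)

/-- `v ∈ {0,1}^n` is an endpoint of the edge `e` (with `*` encoded as `none`). -/
def Compatible {n : ℕ} (v : Fin n → Bool) (e : Fin n → Option Bool) : Prop :=
  ∀ ℓ b, e ℓ = some b → v ℓ = b

/-- The degree of the vertex `v` in the graph `E(Π)` of the order-oblivious protocol `B`. -/
noncomputable def degOO {n : ℕ} (B : Fin n → (Fin n → Option Bool) → Bool)
    (v : Fin n → Bool) : ℕ :=
  {e : Fin n → Option Bool | (∃ σ : Equiv.Perm (Fin n), edgeOO B σ = e) ∧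
    Compatible v e}.ncard

/-- `β` extends `α` as a partial assignment. -/
def OExtends {n : ℕ} (α β : Fin n → Option Bool) : Prop :=
  ∀ ℓ b, α ℓ = some b → β ℓ = some b

/-- The protocol `B` is monotone: each map `A_ℓ` is monotone w.r.t. the extension order. -/
def MonotoneOO {n : ℕ} (B : Fin n → (Fin n → Option Bool) → Bool) : Prop :=
  ∀ (ℓ : Fin n) (α β : Fin n → Option Bool), OExtends α β → B ℓ α = true → B ℓ β = true

/-- `w(σ)`: the bits written by the protocol, listed in arrival order (the first `n - 1`
entries; the final entry of `w(σ)` is the `*`, omitted here). -/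
def wListOO {n : ℕ} (B : Fin n → (Fin n → Option Bool) → Bool) (σ : Equiv.Perm (Fin n)) :
    List Bool :=
  (((List.finRange n).map fun t => writeOO B σ (σ t))).take (n - 1)

section AuxOO

variable {n : ℕ} (B : Fin n → (Fin n → Option Bool) → Bool)

lemma partOO_none (σ : Equiv.Perm (Fin n)) (t : ℕ) (ℓ : Fin n)
    (h : t ≤ (σ.symm ℓ : ℕ)) : partOO B σ t ℓ = none := by
  induction t with
  | zero => rfl
  | succ t ih =>
    simp only [partOO]
    split
    · rename_i hlt
      rw [Function.update_of_ne]
      · exact ih (Nat.le_of_succ_le h)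
      · intro he
        rw [he] at h
        simp at h
    · exact ih (Nat.le_of_succ_le h)

lemma partOO_extends_succ (σ : Equiv.Perm (Fin n)) (t : ℕ) :
    OExtends (partOO B σ t) (partOO B σ (t + 1)) := by
  intro ℓ b hb
  simp only [partOO]
  split
  · rename_i hlt
    rcases eq_or_ne ℓ (σ ⟨t, hlt⟩) with he | he
    · exfalso
      rw [partOO_none B σ t ℓ (by rw [he]; simp)] at hb
      cases hb
    · rwa [Function.update_of_ne he]
  · exact hb

lemma partOO_extends (σ : Equiv.Perm (Fin n)) {t t' : ℕ} (h : t ≤ t') :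
    OExtends (partOO B σ t) (partOO B σ t') := by
  induction t' with
  | zero =>
    have : t = 0 := Nat.le_zero.mp h
    subst this; exact fun ℓ b hb => hb
  | succ t' ih =>
    rcases Nat.lt_or_ge t (t' + 1) with h' | h'
    · intro ℓ b hb
      exact partOO_extends_succ B σ t' ℓ b (ih (Nat.lt_succ_iff.mp h') ℓ b hb)
    · have : t = t' + 1 := le_antisymm h h'
      subst this; intro ℓ b hb; exact hb

lemma partOO_congr (σ τ : Equiv.Perm (Fin n)) (s : ℕ)
    (h : ∀ u : Fin n, (u : ℕ) < s → σ u = τ u) : partOO B σ s = partOO B τ s := by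
  induction s with
  | zero => rfl
  | succ s ih =>
    have ihs := ih (fun u hu => h u (Nat.lt_succ_of_lt hu))
    simp only [partOO]
    split
    · rename_i hlt
      rw [ihs, h ⟨s, hlt⟩ (Nat.lt_succ_self s)]
    · exact ihs

lemma writeOO_apply (σ : Equiv.Perm (Fin n)) (t : Fin n) :
    writeOO B σ (σ t) = B (σ t) (partOO B σ (t : ℕ)) := by
  simp [writeOO]

lemma wListOO_get (σ : Equiv.Perm (Fin n)) (u : ℕ) (hu : u < n - 1) :
    (wListOO B σ)[u]? = some (writeOO B σ (σ ⟨u, by omega⟩)) := by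
  rw [wListOO, List.getElem?_take, if_pos hu, List.getElem?_map,
    List.getElem?_eq_getElem (by simp; omega)]
  simp

lemma lex_aux : ∀ (k : ℕ) (l₁ l₂ : List Bool),
    (∀ i, i < k → l₁[i]? = l₂[i]?) → l₁[k]? = some false →
    l₂[k]? = some true → List.Lex (· < ·) l₁ l₂ := by
  intro k
  induction k with
  | zero =>
    intro l₁ l₂ _ h1 h2
    match l₁, l₂ with
    | a :: t₁, b :: t₂ =>
      simp at h1 h2
      subst h1; subst h2
      exact List.Lex.rel (by decide)
  | succ k ih =>
    intro l₁ l₂ hpre h1 h2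
    match l₁, l₂ with
    | a :: t₁, b :: t₂ =>
      have h0 := hpre 0 (Nat.succ_pos k)
      simp at h0
      subst h0
      exact List.Lex.cons (ih t₁ t₂ (fun i hi => hpre (i+1) (by omega)) h1 h2)

lemma stepOO (hB : MonotoneOO B) (σ : Equiv.Perm (Fin n))
    (hσ : ∀ τ : Equiv.Perm (Fin n), ¬ List.Lex (· < ·) (wListOO B τ) (wListOO B σ))
    (t : ℕ) (h : t + 1 < n - 1)
    (hw : writeOO B σ (σ ⟨t, by omega⟩) = true) :
    writeOO B σ (σ ⟨t + 1, by omega⟩) = true := by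
  by_contra hf
  have ha : t < n := by omega
  have hb : t + 1 < n := by omega
  set a : Fin n := ⟨t, ha⟩ with ha'
  set b : Fin n := ⟨t + 1, hb⟩ with hb'
  have hf' : writeOO B σ (σ b) = false := by
    rcases Bool.eq_false_or_eq_true (writeOO B σ (σ b)) with h' | h'
    · exact absurd h' hf
    · exact h'
  set τ : Equiv.Perm (Fin n) := σ * Equiv.swap a b with hτdef
  have hτ : ∀ u : Fin n, (u : ℕ) < t → σ u = τ u := by
    intro u hu
    have h1 : u ≠ a := by intro he; rw [he] at hu; simp [ha'] at hu
    have h2 : u ≠ b := by intro he; rw [he] at hu; simp [hb'] at hu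
    simp [hτdef, Equiv.Perm.mul_apply, Equiv.swap_apply_of_ne_of_ne h1 h2]
  have hpart : partOO B σ t = partOO B τ t := partOO_congr B σ τ t (fun u hu => hτ u hu)
  have hτa : τ a = σ b := by simp [hτdef, Equiv.Perm.mul_apply, Equiv.swap_apply_left]
  apply hσ τ
  apply lex_aux t
  · intro i hi
    rw [wListOO_get B τ i (by omega), wListOO_get B σ i (by omega)]
    have hi' : (⟨i, by omega⟩ : Fin n) = (⟨i, by omega⟩ : Fin n) := rfl
    rw [writeOO_apply, writeOO_apply]
    have he : τ (⟨i, by omega⟩ : Fin n) = σ (⟨i, by omega⟩ : Fin n) := (hτ ⟨i, by omega⟩ hi).symm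
    rw [he, partOO_congr B τ σ i (fun u hu => (hτ u (by omega)).symm)]
  · rw [wListOO_get B τ t (by omega)]
    have hx : (⟨t, by omega⟩ : Fin n) = a := rfl
    rw [hx, writeOO_apply, hτa, ← hpart]
    have hfb : B (σ b) (partOO B σ t) = false := by
      by_contra h'
      rw [Bool.not_eq_false] at h'
      have h2 := hB (σ b) _ _ (partOO_extends B σ (Nat.le_succ t)) h'
      rw [writeOO_apply] at hf'
      have hbv : ((b : Fin n) : ℕ) = t + 1 := rfl
      rw [hbv] at hf'
      rw [h2] at hf'
      exact Bool.noConfusion hf'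
    rw [hfb]
  · rw [wListOO_get B σ t (by omega)]
    have hx : (⟨t, by omega⟩ : Fin n) = a := rfl
    rw [hx, writeOO_apply]
    rw [writeOO_apply] at hw
    have hav : ((a : Fin n) : ℕ) = t := rfl
    rw [hav] at hw
    rw [hw]

end AuxOO

/-- for a monotone order-oblivious protocol, if `σ` lexicographically
minimizes `w(σ)`, then `w(σ)` is a block of `0`'s followed by a block of `1`'s (followed
by the single `*`): there is an `m` such that the bit at position `t < n - 1` of `w(σ)` is
`1` iff `m ≤ t`. -/

theorem lex_minimal_word_structure {n : ℕ} (hn : 1 ≤ n)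
    (B : Fin n → (Fin n → Option Bool) → Bool) (hB : MonotoneOO B)
    (σ : Equiv.Perm (Fin n))
    (hσ : ∀ τ : Equiv.Perm (Fin n), ¬ List.Lex (· < ·) (wListOO B τ) (wListOO B σ)) :
    ∃ m : ℕ, ∀ t : Fin n, (t : ℕ) < n - 1 →
      (writeOO B σ (σ t) = true ↔ m ≤ (t : ℕ)) := by
  classical
  have mono : ∀ k : ℕ, ∀ hk : k < n, writeOO B σ (σ ⟨k, hk⟩) = true →
      ∀ k', k ≤ k' → k' < n - 1 → ∀ hk' : k' < n, writeOO B σ (σ ⟨k', hk'⟩) = true := by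
    intro k hk hw k' hle
    induction k', hle using Nat.le_induction with
    | base => intro _ hk'; exact hw
    | succ k' hle ih =>
      intro hlt hk'
      have hwk' := ih (by omega) (by omega)
      exact stepOO B hB σ hσ k' (by omega) hwk'
  set S : Set ℕ := {k | ∃ hk : k < n, k < n - 1 ∧ writeOO B σ (σ ⟨k, hk⟩) = true} with hS
  by_cases hE : S.Nonempty
  · refine ⟨sInf S, fun t ht => ?_⟩
    constructor
    · intro hw
      exact Nat.sInf_le ⟨t.isLt, ht, by rw [Fin.eta]; exact hw⟩
    · intro hm
      obtain ⟨hk, hk1, hwm⟩ := Nat.sInf_mem hE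
      have h2 := mono (sInf S) hk hwm t hm ht t.isLt
      rwa [Fin.eta] at h2
  · refine ⟨n - 1, fun t ht => ?_⟩
    constructor
    · intro hw
      have hmem : (t : ℕ) ∈ S := ⟨t.isLt, ht, by rw [Fin.eta]; exact hw⟩
      exact absurd ⟨_, hmem⟩ hE
    · intro hm
      exact absurd hm (by omega)
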